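/- Let B° = A°N ⊆ SL(n,ℝ) where A° is the group of diagonal matrices a(s) = diag(e^{s₁},…,e^{s_n}) with Σ sᵢ = 0 and N the unipotent upper-triangular group. Let ϱ be the right Haar measure on B° given by dϱ(a(s)n(t)) = e^{2δ(s)} ds dt with δ(s) = Σ_{k=1}^{n} (n-k)s_k. For C ∈ ℝ let B_T^C = {a(s)n(t) ∈ B° : ‖a(s)n(t)‖ < T, s_i > C for i = 1,…,n-1}, where ‖g‖ = (Σ g_{ij}²)^{1/2}. Then ϱ(B_T^C) = c_n · ∫_{A_T^C} (T² - N(s))^{n(n-1)/4} · exp(Σ_k (n-k)s_k) ds, where N(s) = Σ_i e^{2sᵢ}, A_T^C = {a(s) : sᵢ > C for i < n, N(s) < T²} (with the integration restricted to where T² - N(s) > 0), and c_n = π^{n(n-1)/4}/Γ(1 + n(n-1)/4). -/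

import Mathlib

open MeasureTheory Real Filter Set

noncomputable section

/-- Index set for the strictly-upper-triangular entries `t_{ij}`, `i < j`. -/
def UTidx (n : ℕ) := {p : Fin n × Fin n // p.1 < p.2}

instance (n : ℕ) : Fintype (UTidx n) := by unfold UTidx; infer_instance

/-- The full vector `s = (s₁,…,sₙ)` with `Σ sᵢ = 0`, parametrized by its
first `n-1` coordinates. -/
def sfull (n : ℕ) (s : Fin (n - 1) → ℝ) : Fin n → ℝ := fun i =>
  if h : (i : ℕ) < n - 1 then s ⟨i, h⟩ else -(∑ j, s j)

/-- `N(s) = Σᵢ e^{2 sᵢ}`. -/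
def Nfun (n : ℕ) (s : Fin (n - 1) → ℝ) : ℝ := ∑ i, Real.exp (2 * sfull n s i)

/-- `‖a(s) n(t)‖² = Σᵢ e^{2 sᵢ} + Σ_{i<j} e^{2 sᵢ} t_{ij}²` (Hilbert–Schmidt norm). -/
def normSq (n : ℕ) (s : Fin (n - 1) → ℝ) (t : UTidx n → ℝ) : ℝ :=
  Nfun n s + ∑ p : UTidx n, Real.exp (2 * sfull n s p.val.1) * (t p) ^ 2

/-- `δ(s) = Σ_{k=1}^{n} (n-k) s_k`. -/
def deltafun (n : ℕ) (s : Fin (n - 1) → ℝ) : ℝ :=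
  ∑ k : Fin n, ((n : ℝ) - ((k : ℕ) + 1)) * sfull n s k

/-- The coordinate region of `B_T° = {b ∈ B° : ‖b‖ < T}`. -/
def BTo (n : ℕ) (T : ℝ) : Set ((Fin (n - 1) → ℝ) × (UTidx n → ℝ)) :=
  {x | normSq n x.1 x.2 < T ^ 2}

/-- `ϱ(B_T°)`, the right Haar measure of `B_T°`, in the coordinates
`dϱ(a(s)n(t)) = e^{2δ(s)} ds dt`. -/
def rhoO (n : ℕ) (T : ℝ) : ℝ := ∫ x in BTo n T, Real.exp (2 * deltafun n x.1)

end

noncomputable section AuxLemmas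

/-- Equivalence between `UTidx n` and a sigma type, used for counting. -/
def UTequiv (n : ℕ) : UTidx n ≃ Σ i : Fin n, {j : Fin n // i < j} where
  toFun p := ⟨p.1.1, p.1.2, p.2⟩
  invFun q := ⟨(q.1, q.2.1), q.2.2⟩
  left_inv _ := rfl
  right_inv _ := rfl

lemma card_subtype_lt_fin {n : ℕ} (i : Fin n) :
    Fintype.card {j : Fin n // i < j} = n - 1 - i := by
  rw [Fintype.card_subtype]
  rw [show Finset.filter (fun j => i < j) Finset.univ = Finset.Ioi i from by ext; simp]
  exact Fin.card_Ioi i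

lemma card_UT (n : ℕ) : Fintype.card (UTidx n) * 2 = n * (n - 1) := by
  rw [Fintype.card_congr (UTequiv n), Fintype.card_sigma]
  simp_rw [card_subtype_lt_fin]
  rw [Fin.sum_univ_eq_sum_range (fun i => n - 1 - i) n]
  rw [show (∑ i ∈ Finset.range n, (n - 1 - i)) = ∑ i ∈ Finset.range n, i from
    Finset.sum_range_reflect id n]
  exact Finset.sum_range_id_mul_two n

lemma sum_UT (n : ℕ) (f : Fin n → ℝ) :
    ∑ p : UTidx n, f p.1.1 = ∑ k : Fin n, ((n : ℝ) - ((k : ℕ) + 1)) * f k := by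
  rw [← Equiv.sum_comp (UTequiv n).symm (fun p : UTidx n => f p.1.1)]
  rw [show (fun q => f ((UTequiv n).symm q).1.1)
      = (fun q : Σ i : Fin n, {j : Fin n // i < j} => f q.1) from rfl]
  rw [← Finset.univ_sigma_univ, Finset.sum_sigma]
  refine Finset.sum_congr rfl fun k _ => ?_
  dsimp only
  rw [Finset.sum_const, Finset.card_univ, card_subtype_lt_fin, nsmul_eq_mul]
  congr 1
  have hk : (k : ℕ) + 1 ≤ n := k.isLt
  rw [show n - 1 - (k:ℕ) = n - ((k:ℕ) + 1) by omega]
  push_cast [Nat.cast_sub hk]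
  ring

open scoped Real in
lemma ellipsoid_vol {ι : Type*} [Fintype ι] [Nonempty ι] [DecidableEq ι] (c : ι → ℝ)
    (hc : ∀ p, 0 < c p) {R : ℝ} (hR : 0 < R) :
    (volume {t : ι → ℝ | ∑ p, (c p * t p) ^ 2 < R}).toReal =
      (∏ p, c p)⁻¹ * ((R ^ ((Fintype.card ι : ℝ) / 2)) *
        (π ^ ((Fintype.card ι : ℝ) / 2) / Real.Gamma ((Fintype.card ι : ℝ) / 2 + 1))) := by
  have hprod : 0 < ∏ p, c p := Finset.prod_pos fun p _ => hc p
  set L : (ι → ℝ) →ₗ[ℝ] (ι → ℝ) := Matrix.toLin' (Matrix.diagonal c) with hL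
  have hdet : LinearMap.det L = ∏ p, c p := by
    rw [hL, LinearMap.det_toLin', Matrix.det_diagonal]
  have hdet0 : LinearMap.det L ≠ 0 := by rw [hdet]; exact hprod.ne'
  have hset : {t : ι → ℝ | ∑ p, (c p * t p) ^ 2 < R} =
      L ⁻¹' {u : ι → ℝ | (∑ p, |u p| ^ (2:ℝ)) ^ ((1:ℝ) / 2) < Real.sqrt R} := by
    ext t
    have hLt : ∀ p, L t p = c p * t p := by
      intro p
      rw [hL, Matrix.toLin'_apply, Matrix.mulVec_diagonal]
    simp only [Set.mem_setOf_eq, Set.mem_preimage, hLt]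
    have habs : ∀ p, |c p * t p| ^ (2:ℝ) = (c p * t p) ^ 2 := by
      intro p
      rw [show ((2:ℝ)) = ((2:ℕ):ℝ) by norm_num, Real.rpow_natCast, sq_abs]
    simp_rw [habs]
    rw [← Real.sqrt_eq_rpow]
    exact (Real.sqrt_lt_sqrt_iff (Finset.sum_nonneg fun p _ => sq_nonneg _)).symm
  rw [hset, Measure.addHaar_preimage_linearMap volume hdet0,
    MeasureTheory.volume_sum_rpow_lt ι one_le_two (Real.sqrt R)]
  rw [hdet]
  have h1 : Real.Gamma (1/2 + 1) = Real.sqrt π / 2 := by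
    rw [Real.Gamma_add_one (by norm_num), Real.Gamma_one_half_eq]; ring
  rw [ENNReal.toReal_mul, ENNReal.toReal_mul, ENNReal.toReal_pow,
    ENNReal.toReal_ofReal (by positivity), ENNReal.toReal_ofReal (Real.sqrt_nonneg _),
    ENNReal.toReal_ofReal (by positivity)]
  rw [abs_of_pos (by positivity), h1]
  rw [show (2 * (Real.sqrt π / 2)) = Real.sqrt π by ring]
  rw [Real.sqrt_eq_rpow R, Real.sqrt_eq_rpow π,
    ← Real.rpow_natCast (R ^ ((1:ℝ)/2)) (Fintype.card ι),
    ← Real.rpow_natCast (π ^ ((1:ℝ)/2)) (Fintype.card ι),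
    ← Real.rpow_mul hR.le, ← Real.rpow_mul Real.pi_nonneg]
  rw [show (1:ℝ)/2 * (Fintype.card ι : ℝ) = (Fintype.card ι : ℝ)/2 by ring]

instance (n : ℕ) : DecidableEq (UTidx n) := by unfold UTidx; infer_instance

end AuxLemmas

/-- `ϱ(B_T^C) = c_n ∫_{A_T^C} (T² - N(s))^{n(n-1)/4} e^{Σ (n-k) s_k} ds`,
where `c_n = π^{n(n-1)/4} / Γ(1 + n(n-1)/4)`. -/
theorem lattice_action_lem_BTC (n : ℕ) (hn : 2 ≤ n) (C T : ℝ) (hT : 0 < T) :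
    (∫ x in {x : (Fin (n - 1) → ℝ) × (UTidx n → ℝ) |
        (∀ i, C < x.1 i) ∧ normSq n x.1 x.2 < T ^ 2},
      Real.exp (2 * deltafun n x.1)) =
    (Real.pi ^ (((n * (n - 1) : ℕ) : ℝ) / 4) / Real.Gamma (1 + ((n * (n - 1) : ℕ) : ℝ) / 4)) *
      ∫ s in {s : Fin (n - 1) → ℝ | (∀ i, C < s i) ∧ Nfun n s < T ^ 2},
        (T ^ 2 - Nfun n s) ^ (((n * (n - 1) : ℕ) : ℝ) / 4) * Real.exp (deltafun n s) := by
  haveI : Nonempty (UTidx n) :=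
    ⟨⟨(⟨0, by omega⟩, ⟨1, by omega⟩), by simp [Fin.lt_def]⟩⟩
  set m := Fintype.card (UTidx n) with hm
  have hm2 : (m : ℝ) * 2 = ((n * (n - 1) : ℕ) : ℝ) := by exact_mod_cast card_UT n
  have hq : ((n * (n - 1) : ℕ) : ℝ) / 4 = (m : ℝ) / 2 := by rw [← hm2]; ring
  -- continuity facts
  have hsf : ∀ i : Fin n, Continuous fun s : Fin (n-1) → ℝ => sfull n s i := by
    intro i
    unfold sfull
    by_cases h : (i:ℕ) < n - 1
    · simp only [dif_pos h]; exact continuous_apply _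
    · simp only [dif_neg h]
      exact (continuous_finset_sum _ fun j _ => continuous_apply j).neg
  have hNc : Continuous (Nfun n) := by
    unfold Nfun
    exact continuous_finset_sum _ fun i _ =>
      Real.continuous_exp.comp (continuous_const.mul (hsf i))
  have hdc : Continuous (deltafun n) := by
    unfold deltafun
    exact continuous_finset_sum _ fun k _ => continuous_const.mul (hsf k)
  have hnsc : Continuous fun x : (Fin (n-1) → ℝ) × (UTidx n → ℝ) => normSq n x.1 x.2 := by
    unfold normSq
    refine (hNc.comp continuous_fst).add (continuous_finset_sum _ fun p _ => ?_)
    exact (Real.continuous_exp.comp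
      (continuous_const.mul ((hsf p.1.1).comp continuous_fst))).mul
      (((continuous_apply p).comp continuous_snd).pow 2)
  set S := {x : (Fin (n - 1) → ℝ) × (UTidx n → ℝ) |
      (∀ i, C < x.1 i) ∧ normSq n x.1 x.2 < T ^ 2} with hSdef
  set A := {s : Fin (n - 1) → ℝ | (∀ i, C < s i) ∧ Nfun n s < T ^ 2} with hAdef
  have hSopen : IsOpen S := by
    rw [hSdef, show {x : (Fin (n - 1) → ℝ) × (UTidx n → ℝ) |
        (∀ i, C < x.1 i) ∧ normSq n x.1 x.2 < T ^ 2} =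
        (⋂ i, {x : (Fin (n - 1) → ℝ) × (UTidx n → ℝ) | C < x.1 i}) ∩
          {x : (Fin (n - 1) → ℝ) × (UTidx n → ℝ) | normSq n x.1 x.2 < T ^ 2} from by
      ext x; simp [Set.mem_iInter]]
    exact ((isOpen_iInter_of_finite fun i =>
      isOpen_lt continuous_const ((continuous_apply i).comp continuous_fst)).inter
      (isOpen_lt hnsc continuous_const))
  have hAopen : IsOpen A := by
    rw [hAdef, show {s : Fin (n - 1) → ℝ | (∀ i, C < s i) ∧ Nfun n s < T ^ 2} =
        (⋂ i, {s : Fin (n - 1) → ℝ | C < s i}) ∩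
          {s : Fin (n - 1) → ℝ | Nfun n s < T ^ 2} from by
      ext s; simp [Set.mem_iInter]]
    exact ((isOpen_iInter_of_finite fun i =>
      isOpen_lt continuous_const (continuous_apply i)).inter
      (isOpen_lt hNc continuous_const))
  have hterm_nonneg : ∀ (s : Fin (n-1) → ℝ) (t : UTidx n → ℝ), (0:ℝ) ≤ ∑ p : UTidx n, Real.exp (2 * sfull n s p.1.1) * (t p)^2 :=
    fun s t => Finset.sum_nonneg fun p _ => mul_nonneg (Real.exp_pos _).le (sq_nonneg _)
  have hplt : ∀ p : UTidx n, (p.1.1 : ℕ) < n - 1 := by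
    intro p
    have h1 : (p.1.1 : ℕ) < (p.1.2 : ℕ) := p.2
    have h2 := p.1.2.isLt
    omega
  have hsp : ∀ (s : Fin (n-1) → ℝ) (p : UTidx n), sfull n s p.1.1 = s ⟨p.1.1, hplt p⟩ := by
    intro s p
    simp only [sfull]
    rw [dif_pos (hplt p)]
  -- compact superset of S
  set B := T * Real.exp (-C) with hB
  have hBpos : 0 < B := by positivity
  have hK : IsCompact ((Set.Icc (fun _ : Fin (n-1) => C) (fun _ => Real.log T)) ×ˢ
      (Set.Icc (fun _ : UTidx n => -B) (fun _ => B))) := isCompact_Icc.prod isCompact_Icc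
  have hSsub : S ⊆ (Set.Icc (fun _ : Fin (n-1) => C) (fun _ => Real.log T)) ×ˢ
      (Set.Icc (fun _ : UTidx n => -B) (fun _ => B)) := by
    rintro ⟨s, t⟩ ⟨h1, h2⟩
    have h2' : Nfun n s + ∑ p : UTidx n, Real.exp (2 * sfull n s p.1.1) * (t p)^2 < T^2 := h2
    have hNlt : Nfun n s < T ^ 2 :=
      lt_of_le_of_lt (le_add_of_nonneg_right (hterm_nonneg s t)) h2'
    constructor
    · rw [Set.mem_Icc]
      refine ⟨fun i => (h1 i).le, fun i => ?_⟩
      have hle : Real.exp (2 * s i) ≤ Nfun n s := by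
        have he : Real.exp (2 * s i) = Real.exp
            (2 * sfull n s ⟨(i:ℕ), lt_of_lt_of_le i.isLt (Nat.sub_le n 1)⟩) := by
          congr 2
          simp only [sfull]
          rw [dif_pos i.isLt]
        rw [he]
        exact Finset.single_le_sum (f := fun j : Fin n => Real.exp (2 * sfull n s j))
          (fun j _ => (Real.exp_pos _).le) (Finset.mem_univ _)
      have hlt : Real.exp (2 * s i) < T ^ 2 := lt_of_le_of_lt hle hNlt
      have : 2 * s i < Real.log (T ^ 2) := (Real.lt_log_iff_exp_lt (by positivity)).mpr hlt
      rw [Real.log_pow] at this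
      push_cast at this
      linarith
    · rw [Set.mem_Icc]
      have hbd : ∀ p : UTidx n, |t p| ≤ B := by
        intro p
        have hsingle : Real.exp (2 * sfull n s p.1.1) * (t p)^2 ≤
            ∑ q : UTidx n, Real.exp (2 * sfull n s q.1.1) * (t q)^2 :=
          Finset.single_le_sum
            (f := fun q : UTidx n => Real.exp (2 * sfull n s q.1.1) * (t q)^2)
            (fun q _ => mul_nonneg (Real.exp_pos _).le (sq_nonneg _)) (Finset.mem_univ p)
        have h3 : Real.exp (2 * sfull n s p.1.1) * (t p)^2 < T^2 := by
          have hN0 : 0 < Nfun n s :=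
            Finset.sum_pos (fun i _ => Real.exp_pos _) ⟨⟨0, by omega⟩, Finset.mem_univ _⟩
          linarith
        have hCs : C < sfull n s p.1.1 := by rw [hsp s p]; exact h1 _
        have hexpC : Real.exp (2 * C) < Real.exp (2 * sfull n s p.1.1) :=
          Real.exp_lt_exp.mpr (by linarith)
        have htp2 : (t p)^2 ≤ B^2 := by
          have hB2 : B^2 = T^2 * (Real.exp (2*C))⁻¹ := by
            rw [hB, mul_pow, sq (Real.exp (-C)), ← Real.exp_add,
              show -C + -C = -(2*C) by ring, Real.exp_neg]
          rw [hB2, ← div_eq_mul_inv]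
          exact (le_div_iff₀ (Real.exp_pos (2*C))).mpr (by nlinarith [sq_nonneg (t p)])
        have := Real.sqrt_le_sqrt htp2
        rwa [Real.sqrt_sq_eq_abs, Real.sqrt_sq hBpos.le] at this
      exact ⟨fun p => (abs_le.mp (hbd p)).1, fun p => (abs_le.mp (hbd p)).2⟩
  have hgc : Continuous fun x : (Fin (n-1) → ℝ) × (UTidx n → ℝ) =>
      Real.exp (2 * deltafun n x.1) :=
    Real.continuous_exp.comp (continuous_const.mul (hdc.comp continuous_fst))
  have hSm : MeasurableSet S := hSopen.measurableSet
  have hAm : MeasurableSet A := hAopen.measurableSet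
  have hint : IntegrableOn (fun x => Real.exp (2 * deltafun n x.1)) S volume :=
    (hgc.continuousOn.integrableOn_compact hK).mono_set hSsub
  rw [← MeasureTheory.integral_indicator hSm]
  have hInd : Integrable (S.indicator fun x => Real.exp (2 * deltafun n x.1))
      (volume.prod volume) := by
    rw [← MeasureTheory.Measure.volume_eq_prod]
    exact (integrable_indicator_iff hSm).mpr hint
  rw [MeasureTheory.Measure.volume_eq_prod, MeasureTheory.integral_prod _ hInd]
  have key : ∀ s : Fin (n-1) → ℝ,
      (∫ t : UTidx n → ℝ, (S.indicator fun x => Real.exp (2 * deltafun n x.1)) (s, t)) =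
      A.indicator (fun s =>
        (Real.pi ^ (((n * (n - 1) : ℕ) : ℝ) / 4) /
          Real.Gamma (1 + ((n * (n - 1) : ℕ) : ℝ) / 4)) *
        ((T ^ 2 - Nfun n s) ^ (((n * (n - 1) : ℕ) : ℝ) / 4) * Real.exp (deltafun n s))) s := by
    intro s
    have hfun : (fun t : UTidx n → ℝ =>
        (S.indicator fun x => Real.exp (2 * deltafun n x.1)) (s, t))
        = Set.indicator {t : UTidx n → ℝ | (s, t) ∈ S}
            (fun _ => Real.exp (2 * deltafun n s)) := by
      ext t
      by_cases h : (s, t) ∈ S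
      · rw [Set.indicator_of_mem h, Set.indicator_of_mem (show t ∈ _ from h)]
      · rw [Set.indicator_of_notMem h, Set.indicator_of_notMem (show t ∉ _ from h)]
    rw [hfun]
    by_cases hP : ∀ i, C < s i
    · by_cases hNT : Nfun n s < T ^ 2
      · have hsA : s ∈ A := ⟨hP, hNT⟩
        have hR : (0:ℝ) < T ^ 2 - Nfun n s := by linarith
        have hfib : {t : UTidx n → ℝ | (s, t) ∈ S} =
            {t : UTidx n → ℝ |
              ∑ p : UTidx n, (Real.exp (sfull n s p.1.1) * t p) ^ 2 < T ^ 2 - Nfun n s} := by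
          ext t
          have hsq : ∀ x y : ℝ, Real.exp (2 * x) * y ^ 2 = (Real.exp x * y) ^ 2 := by
            intro x y
            rw [mul_pow, sq (Real.exp x), ← Real.exp_add, ← two_mul]
          simp only [hSdef, Set.mem_setOf_eq]
          constructor
          · rintro ⟨-, h2⟩
            have h2' : Nfun n s + ∑ p : UTidx n,
                Real.exp (2 * sfull n s p.1.1) * (t p)^2 < T^2 := h2
            simp_rw [← hsq]
            linarith
          · intro h2
            refine ⟨hP, ?_⟩
            show Nfun n s + ∑ p : UTidx n, Real.exp (2 * sfull n s p.1.1) * (t p)^2 < T^2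
            simp_rw [hsq]
            linarith
        rw [hfib]
        have hmeas : MeasurableSet {t : UTidx n → ℝ |
            ∑ p : UTidx n, (Real.exp (sfull n s p.1.1) * t p) ^ 2 < T ^ 2 - Nfun n s} :=
          measurableSet_lt ((continuous_finset_sum _ fun p _ =>
            (continuous_const.mul (continuous_apply p)).pow 2).measurable) measurable_const
        rw [MeasureTheory.integral_indicator_const _ hmeas, smul_eq_mul]
        rw [measureReal_def, ellipsoid_vol (fun p : UTidx n => Real.exp (sfull n s p.1.1))
          (fun p => Real.exp_pos _) hR]
        rw [Set.indicator_of_mem hsA]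
        have hprodexp : (∏ p : UTidx n, Real.exp (sfull n s p.1.1))
            = Real.exp (deltafun n s) := by
          rw [← Real.exp_sum, sum_UT n (sfull n s)]
          rfl
        rw [hprodexp, ← hm, hq, ← Real.exp_neg]
        rw [show (1:ℝ) + (m:ℝ)/2 = (m:ℝ)/2 + 1 by ring]
        rw [show Real.exp (-deltafun n s) *
            ((T^2 - Nfun n s) ^ ((m:ℝ)/2) *
              (π ^ ((m:ℝ)/2) / Real.Gamma ((m:ℝ)/2 + 1))) * Real.exp (2 * deltafun n s)
            = (π ^ ((m:ℝ)/2) / Real.Gamma ((m:ℝ)/2 + 1)) *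
              ((T^2 - Nfun n s) ^ ((m:ℝ)/2) *
                (Real.exp (-deltafun n s) * Real.exp (2 * deltafun n s))) from by ring]
        rw [← Real.exp_add, show -deltafun n s + 2 * deltafun n s = deltafun n s by ring]
      · have hfib : {t : UTidx n → ℝ | (s, t) ∈ S} = ∅ := by
          ext t
          simp only [hSdef, Set.mem_setOf_eq, Set.mem_empty_iff_false, iff_false, not_and]
          rintro - h2
          have h2' : Nfun n s + ∑ p : UTidx n,
              Real.exp (2 * sfull n s p.1.1) * (t p)^2 < T^2 := h2
          exact hNT (lt_of_le_of_lt (le_add_of_nonneg_right (hterm_nonneg s t)) h2')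
        rw [hfib]
        rw [Set.indicator_of_notMem (fun h => hNT h.2)]
        simp
    · have hfib : {t : UTidx n → ℝ | (s, t) ∈ S} = ∅ := by
        ext t
        simp only [hSdef, Set.mem_setOf_eq, Set.mem_empty_iff_false, iff_false, not_and]
        rintro h1 -
        exact absurd h1 hP
      rw [hfib]
      rw [Set.indicator_of_notMem (fun h => hP h.1)]
      simp
  simp_rw [key]
  rw [MeasureTheory.integral_indicator hAm, MeasureTheory.integral_const_mul]
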